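/- Let ABC be a triangle and let X be a point lying inside or on the boundary of triangle ABC. Then for every point Y in the plane, a·AX·AY + b·BX·BY + c·CX·CY ≥ a·b·c, and the minimum value a·b·c of the left-hand side over Y is attained exactly at the isogonal conjugate of X (characterized as the point Y for which the three numbers (x-a)(y-a)/((b-a)(c-a)) etc. are nonnegative reals). -/

import Mathlib

lemma aux_nonneg_real16 (z : ℂ) :
    (∃ r : ℝ, 0 ≤ r ∧ z = (r : ℂ)) ↔ ‖z‖ = z.re := by
  constructor
  · rintro ⟨r, hr, rfl⟩
    simp [Complex.norm_real, Real.norm_eq_abs, abs_of_nonneg hr]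
  · intro h
    refine ⟨z.re, ?_, ?_⟩
    · rw [← h]; exact norm_nonneg z
    · have him : z.im = 0 := by
        have hsq : ‖z‖ * ‖z‖ = z.re * z.re + z.im * z.im := by
          have := Complex.sq_norm z
          rw [Complex.normSq_apply] at this
          nlinarith [this]
        rw [h] at hsq
        have : z.im * z.im = 0 := by linarith
        exact mul_self_eq_zero.mp this
      exact (Complex.ext (by simp) (by simp [him])).symm

theorem stmt_16 (a b c x : ℂ) (hab : a ≠ b) (hac : a ≠ c) (hbc : b ≠ c)
    (hnc : ¬ Collinear ℝ ({a, b, c} : Set ℂ))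
    (hx : ∃ u v w : ℝ, 0 ≤ u ∧ 0 ≤ v ∧ 0 ≤ w ∧ u + v + w = 1 ∧
      x = (u : ℂ) * a + (v : ℂ) * b + (w : ℂ) * c) :
    (∀ y : ℂ, dist b c * dist a x * dist a y + dist c a * dist b x * dist b y +
        dist a b * dist c x * dist c y ≥ dist b c * dist c a * dist a b) ∧
    (∀ y : ℂ, (dist b c * dist a x * dist a y + dist c a * dist b x * dist b y +
        dist a b * dist c x * dist c y = dist b c * dist c a * dist a b) ↔
      ((∃ r : ℝ, 0 ≤ r ∧ (x - a) * (y - a) / ((b - a) * (c - a)) = (r : ℂ)) ∧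
       (∃ r : ℝ, 0 ≤ r ∧ (x - b) * (y - b) / ((a - b) * (c - b)) = (r : ℂ)) ∧
       (∃ r : ℝ, 0 ≤ r ∧ (x - c) * (y - c) / ((a - c) * (b - c)) = (r : ℂ)))) := by
  have h1 : b - a ≠ 0 := sub_ne_zero.mpr (Ne.symm hab)
  have h2 : c - a ≠ 0 := sub_ne_zero.mpr (Ne.symm hac)
  have h3 : a - b ≠ 0 := sub_ne_zero.mpr hab
  have h4 : c - b ≠ 0 := sub_ne_zero.mpr (Ne.symm hbc)
  have h5 : a - c ≠ 0 := sub_ne_zero.mpr hac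
  have h6 : b - c ≠ 0 := sub_ne_zero.mpr hbc
  have na1 : ‖a - b‖ ≠ 0 := norm_ne_zero_iff.mpr h3
  have na2 : ‖a - c‖ ≠ 0 := norm_ne_zero_iff.mpr h5
  have na3 : ‖b - c‖ ≠ 0 := norm_ne_zero_iff.mpr h6
  set D : ℝ := ‖a - b‖ * ‖a - c‖ * ‖b - c‖ with hD
  have hD0 : 0 < D := by
    have := norm_nonneg (a - b)
    have := norm_nonneg (a - c)
    have := norm_nonneg (b - c)
    rcases lt_or_eq_of_le (norm_nonneg (a-b)) with h|h
    · rcases lt_or_eq_of_le (norm_nonneg (a-c)) with h'|h'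
      · rcases lt_or_eq_of_le (norm_nonneg (b-c)) with h''|h''
        · positivity
        · exact absurd h''.symm na3
      · exact absurd h'.symm na2
    · exact absurd h.symm na1
  -- key algebraic identity
  have hsum : ∀ y : ℂ, (x - a) * (y - a) / ((b - a) * (c - a)) +
      (x - b) * (y - b) / ((a - b) * (c - b)) +
      (x - c) * (y - c) / ((a - c) * (b - c)) = 1 := by
    intro y
    field_simp
    ring
  have hL : ∀ y : ℂ, dist b c * dist a x * dist a y + dist c a * dist b x * dist b y +
      dist a b * dist c x * dist c y =
      (‖(x - a) * (y - a) / ((b - a) * (c - a))‖ +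
       ‖(x - b) * (y - b) / ((a - b) * (c - b))‖ +
       ‖(x - c) * (y - c) / ((a - c) * (b - c))‖) * D := by
    intro y
    simp only [Complex.dist_eq, norm_div, norm_mul, hD]
    rw [norm_sub_rev a x, norm_sub_rev a y, norm_sub_rev b x,
      norm_sub_rev b y, norm_sub_rev c x, norm_sub_rev c y,
      norm_sub_rev c a, norm_sub_rev b a, norm_sub_rev c b]
    field_simp
  have hR : dist b c * dist c a * dist a b = D := by
    simp only [Complex.dist_eq, hD]
    rw [norm_sub_rev c a]
    ring
  have hS : ∀ y : ℂ, 1 ≤ ‖(x - a) * (y - a) / ((b - a) * (c - a))‖ +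
      ‖(x - b) * (y - b) / ((a - b) * (c - b))‖ +
      ‖(x - c) * (y - c) / ((a - c) * (b - c))‖ := by
    intro y
    calc (1 : ℝ) = ‖(x - a) * (y - a) / ((b - a) * (c - a)) +
        (x - b) * (y - b) / ((a - b) * (c - b)) +
        (x - c) * (y - c) / ((a - c) * (b - c))‖ := by rw [hsum y]; simp
      _ ≤ _ := by
        refine le_trans (norm_add_le _ _) ?_
        have := norm_add_le ((x - a) * (y - a) / ((b - a) * (c - a)))
          ((x - b) * (y - b) / ((a - b) * (c - b)))
        linarith
  constructor
  · intro y
    rw [ge_iff_le, hR, hL y]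
    nlinarith [hS y]
  · intro y
    set z1 := (x - a) * (y - a) / ((b - a) * (c - a)) with hz1
    set z2 := (x - b) * (y - b) / ((a - b) * (c - b)) with hz2
    set z3 := (x - c) * (y - c) / ((a - c) * (b - c)) with hz3
    have hre : z1.re + z2.re + z3.re = 1 := by
      have := congrArg Complex.re (hsum y)
      simpa [Complex.add_re] using this
    have r1 := Complex.re_le_norm z1
    have r2 := Complex.re_le_norm z2
    have r3 := Complex.re_le_norm z3
    rw [hL y, hR]
    constructor
    · intro h
      have hSeq : ‖z1‖ + ‖z2‖ + ‖z3‖ = 1 := by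
        have := mul_right_cancel₀ (ne_of_gt hD0) (h.trans (one_mul D).symm)
        exact this
      refine ⟨(aux_nonneg_real16 z1).mpr (by linarith),
        (aux_nonneg_real16 z2).mpr (by linarith),
        (aux_nonneg_real16 z3).mpr (by linarith)⟩
    · rintro ⟨e1, e2, e3⟩
      have a1 := (aux_nonneg_real16 z1).mp e1
      have a2 := (aux_nonneg_real16 z2).mp e2
      have a3 := (aux_nonneg_real16 z3).mp e3
      rw [a1, a2, a3, hre, one_mul]
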